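/- Let p be a prime, k ≥ 1, q = p^k, let χ and ψ both be primitive Dirichlet characters modulo q, and let m₁, m₂, m₃, r be powers of p (nonnegative integer exponents) with gcd(m₁, r) = 1. Then Ĥ(ψ, χ, m₁, m₂, m₃, r) = 0 unless m₁ = m₂ = m₃ = r = 1, and in that case Ĥ(ψ, χ, 1, 1, 1, 1) = τ(conj(ψ)) · g(χ, ψ). -/

import Mathlib

open Finset Complex
set_option maxHeartbeats 1000000

/-- e_q(x) = exp(2πi x / q). -/
noncomputable def eN (q : ℕ) (x : ℤ) : ℂ :=
  Complex.exp (2 * Real.pi * Complex.I * x / q)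

/-- Ĥ(ψ,χ,m₁,m₂,m₃,r) = ∑_{t,u,v ∈ ℤ/qℤ} χ(t+m₂u)·conj(χ)(rt+m₁m₂)·conj(χ)(u)·
χ(−m₁+ru)·e_q(m₃·(vt)̃)·conj(ψ)(v). -/
noncomputable def Hhat {q : ℕ} [NeZero q] (ψ χ : DirichletCharacter ℂ q)
    (m₁ m₂ m₃ r : ℤ) : ℂ :=
  ∑ t : ZMod q, ∑ u : ZMod q, ∑ v : ZMod q,
    χ (t + (m₂ : ZMod q) * u) * (starRingEnd ℂ) (χ ((r : ZMod q) * t + ((m₁ * m₂ : ℤ) : ZMod q))) *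
      (starRingEnd ℂ) (χ u) * χ (-(m₁ : ZMod q) + (r : ZMod q) * u) *
      eN q (m₃ * (((v * t)).val : ℤ)) * (starRingEnd ℂ) (ψ v)

/-- The Gauss sum τ(f) = ∑_{v ∈ ℤ/qℤ} f(v)·e_q(ṽ). -/
noncomputable def gaussSumE (q : ℕ) [NeZero q] (f : ZMod q → ℂ) : ℂ :=
  ∑ v : ZMod q, f v * eN q (v.val : ℤ)

/-- g(χ,ψ) = ∑_{t,u ∈ ℤ/qℤ} χ(t)·conj(χ)(t+1)·conj(χ)(u)·χ(u+1)·ψ(ut−1). -/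
noncomputable def gSum {q : ℕ} [NeZero q] (χ ψ : DirichletCharacter ℂ q) : ℂ :=
  ∑ t : ZMod q, ∑ u : ZMod q,
    χ t * (starRingEnd ℂ) (χ (t + 1)) * (starRingEnd ℂ) (χ u) * χ (u + 1) * ψ (u * t - 1)

/-- For q = p^k (k ≥ 1), χ, ψ primitive modulo q, and m₁, m₂, m₃, r powers of p with
gcd(m₁,r) = 1: Ĥ(ψ,χ,m₁,m₂,m₃,r) vanishes unless m₁ = m₂ = m₃ = r = 1, and
Ĥ(ψ,χ,1,1,1,1) = τ(conj(ψ))·g(χ,ψ). -/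

lemma eN_eq_of_cast_eq {q : ℕ} [NeZero q] {a b : ℤ} (h : (a : ZMod q) = (b : ZMod q)) :
    eN q a = eN q b := by
  have hq : (q : ℤ) ∣ a - b := by
    rwa [← ZMod.intCast_zmod_eq_zero_iff_dvd, Int.cast_sub, sub_eq_zero]
  obtain ⟨c, hc⟩ := hq
  have ha : a = b + q * c := by linarith
  have hq0 : (q : ℂ) ≠ 0 := Nat.cast_ne_zero.2 (NeZero.ne q)
  rw [ha, eN, eN]
  push_cast
  rw [show 2 * (Real.pi:ℂ) * Complex.I * (b + q * c) / q
      = 2 * (Real.pi:ℂ) * Complex.I * b / q + c * (2 * Real.pi * Complex.I) by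
    field_simp, Complex.exp_add, Complex.exp_int_mul_two_pi_mul_I, mul_one]

lemma unit_mul_conj {q : ℕ} (χ : DirichletCharacter ℂ q) {x : ZMod q} (h : IsUnit x) :
    χ x * (starRingEnd ℂ) (χ x) = 1 := by
  have h1 := DirichletCharacter.unit_norm_eq_one χ h.unit
  rw [IsUnit.unit_spec] at h1
  rw [Complex.mul_conj, Complex.normSq_eq_norm_sq, h1]
  norm_num

lemma char_inv {q : ℕ} (χ : DirichletCharacter ℂ q) (u : (ZMod q)ˣ) :
    χ ((u⁻¹ : (ZMod q)ˣ) : ZMod q) = (starRingEnd ℂ) (χ (u : ZMod q)) := by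
  have h1 : χ ((u⁻¹ : (ZMod q)ˣ) : ZMod q) * χ (u : ZMod q) = 1 := by
    rw [← map_mul, ← Units.val_mul, inv_mul_cancel, Units.val_one, map_one]
  have h2 : (starRingEnd ℂ) (χ (u : ZMod q)) * χ (u : ZMod q) = 1 := by
    rw [mul_comm]; exact unit_mul_conj χ u.isUnit
  have hne : χ (u : ZMod q) ≠ 0 := by
    intro h; rw [h, mul_zero] at h1; exact one_ne_zero h1.symm
  exact mul_right_cancel₀ hne (h1.trans h2.symm)

lemma conj_char_inv {q : ℕ} (χ : DirichletCharacter ℂ q) (u : (ZMod q)ˣ) :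
    (starRingEnd ℂ) (χ ((u⁻¹ : (ZMod q)ˣ) : ZMod q)) = χ (u : ZMod q) := by
  rw [char_inv, Complex.conj_conj]

lemma sum_zmod_mul_unit {q : ℕ} [NeZero q] (w : (ZMod q)ˣ) (g : ZMod q → ℂ) :
    ∑ x : ZMod q, g ((w : ZMod q) * x) = ∑ x : ZMod q, g x := by
  apply Fintype.sum_bijective (fun x : ZMod q => (w : ZMod q) * x)
  · exact Function.bijective_iff_has_inverse.2 ⟨fun x => ((w⁻¹ : (ZMod q)ˣ) : ZMod q) * x,
      fun x => by simp [← mul_assoc], fun x => by simp [← mul_assoc]⟩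
  · intro _; rfl

lemma sum_zmod_neg {q : ℕ} [NeZero q] (g : ZMod q → ℂ) :
    ∑ x : ZMod q, g (-x) = ∑ x : ZMod q, g x :=
  Fintype.sum_equiv (Equiv.neg _) _ _ (fun _ => rfl)

lemma sum_zmod_add {q : ℕ} [NeZero q] (a : ZMod q) (g : ZMod q → ℂ) :
    ∑ x : ZMod q, g (x + a) = ∑ x : ZMod q, g x :=
  Fintype.sum_equiv (Equiv.addRight a) _ _ (fun _ => rfl)

lemma sum_units_inv {q : ℕ} [NeZero q] (g : (ZMod q)ˣ → ℂ) :
    ∑ u : (ZMod q)ˣ, g u⁻¹ = ∑ u, g u :=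
  Fintype.sum_equiv (Equiv.inv _) _ _ (fun _ => rfl)

lemma sum_eq_sum_units {q : ℕ} [NeZero q] (f : ZMod q → ℂ)
    (h : ∀ x, ¬IsUnit x → f x = 0) : ∑ x : ZMod q, f x = ∑ u : (ZMod q)ˣ, f ↑u := by
  classical
  rw [← Finset.sum_filter_of_ne (p := fun x : ZMod q => IsUnit x)
    (fun x _ hx => by by_contra hc; exact hx (h x hc))]
  refine (Finset.sum_bij (fun (u : (ZMod q)ˣ) _ => (u : ZMod q)) ?_ ?_ ?_ ?_).symm
  · intro u _; simp [u.isUnit]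
  · intro a _ b _ hab; exact Units.ext hab
  · intro x hx
    simp only [Finset.mem_filter] at hx
    exact ⟨hx.2.unit, Finset.mem_univ _, hx.2.unit_spec.symm⟩
  · intro u _; rfl

lemma eN_val_eq {q : ℕ} [NeZero q] (m : ℤ) (x : ZMod q) :
    eN q (m * (x.val : ℤ)) = eN q (((m : ZMod q) * x).val : ℤ) := by
  apply eN_eq_of_cast_eq
  push_cast [ZMod.intCast_cast, ZMod.natCast_val, ZMod.intCast_zmod_cast]
  simp [ZMod.intCast_zmod_cast]

-- nonunit decomposition
lemma nonunit_eq_p_mul (p k : ℕ) [Fact p.Prime] [NeZero (p ^ k)] (hk : 1 ≤ k)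
    (t : ZMod (p ^ k)) (h : ¬IsUnit t) : ∃ c : ZMod (p ^ k), t = (p : ZMod (p ^ k)) * c := by
  have hp : p.Prime := Fact.out
  have hval : ¬ (t.val).Coprime (p ^ k) := by
    intro hc
    apply h
    have : IsUnit ((t.val : ZMod (p ^ k))) := (ZMod.isUnit_iff_coprime _ _).2 hc
    rwa [ZMod.natCast_val, ZMod.cast_id] at this
  have hpd : p ∣ t.val := by
    by_contra hnd
    exact hval (Nat.Coprime.pow_right _ ((Nat.Prime.coprime_iff_not_dvd hp).2 hnd).symm)
  obtain ⟨c, hc⟩ := hpd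
  refine ⟨(c : ZMod (p ^ k)), ?_⟩
  have ht : ((t.val : ℕ) : ZMod (p ^ k)) = t := by rw [ZMod.natCast_val, ZMod.cast_id]
  rw [← ht, hc]; push_cast; ring


lemma exists_bad_unit (p k : ℕ) [Fact p.Prime] (hk : 1 ≤ k)
    (ψ : DirichletCharacter ℂ (p ^ k)) (hψ : ψ.IsPrimitive) :
    ∃ w : (ZMod (p ^ k))ˣ, ψ (w : ZMod (p ^ k)) ≠ 1 ∧
      (p : ZMod (p ^ k)) * ((w : ZMod (p ^ k)) - 1) = 0 := by
  have hp : p.Prime := Fact.out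
  haveI : NeZero (p ^ k) := ⟨pow_ne_zero _ hp.ne_zero⟩
  haveI : NeZero (p ^ (k - 1)) := ⟨pow_ne_zero _ hp.ne_zero⟩
  have hd : p ^ (k - 1) ∣ p ^ k := pow_dvd_pow p (Nat.sub_le k 1)
  by_contra hcon
  push_neg at hcon
  -- every w in ker of unitsMap satisfies the zero condition, hence ψ w = 1
  have hker : (ZMod.unitsMap hd).ker ≤ ψ.toUnitHom.ker := by
    intro w hw
    have hcast : (ZMod.castHom hd (ZMod (p ^ (k - 1)))) ((w : ZMod (p ^ k)) - 1) = 0 := by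
      have h1 : ((ZMod.unitsMap hd w : (ZMod (p ^ (k-1)))ˣ) : ZMod (p ^ (k - 1))) = 1 := by
        rw [MonoidHom.mem_ker] at hw; rw [hw]; rfl
      rw [ZMod.unitsMap_def] at h1
      simp only [Units.coe_map, MonoidHom.coe_coe] at h1
      rw [map_sub, map_one, h1, sub_self]
    -- deduce p * (w - 1) = 0
    have hzero : (p : ZMod (p ^ k)) * ((w : ZMod (p ^ k)) - 1) = 0 := by
      set x : ZMod (p ^ k) := (w : ZMod (p ^ k)) - 1 with hx
      have hvd : p ^ (k - 1) ∣ x.val := by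
        have : ((x.val : ℕ) : ZMod (p ^ (k - 1))) = 0 := by
          rwa [ZMod.castHom_apply, ← ZMod.natCast_val] at hcast
        exact (ZMod.natCast_eq_zero_iff _ _).1 this
      obtain ⟨c, hc⟩ := hvd
      have hxx : x = ((p ^ (k - 1) * c : ℕ) : ZMod (p ^ k)) := by
        rw [← hc, ZMod.natCast_val, ZMod.cast_id]
      rw [hxx]
      push_cast
      rw [← mul_assoc, ← pow_succ']
      have : k - 1 + 1 = k := Nat.sub_add_cancel hk
      rw [this]
      rw [show ((p : ZMod (p ^ k)) ^ k : ZMod (p ^ k)) = ((p ^ k : ℕ) : ZMod (p ^ k)) by push_cast; ring,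
        ZMod.natCast_self, zero_mul]
    -- so ψ w = 1
    have hone : ψ (w : ZMod (p ^ k)) = 1 := by
      by_contra hne
      exact (hcon w hne) hzero
    rw [MonoidHom.mem_ker]
    apply Units.ext
    rw [MulChar.coe_toUnitHom]
    simpa using hone
  have hft : ψ.FactorsThrough (p ^ (k - 1)) :=
    (DirichletCharacter.factorsThrough_iff_ker_unitsMap hd).2 hker
  have hle : ψ.conductor ≤ p ^ (k - 1) := Nat.sInf_le hft
  rw [hψ] at hle
  exact absurd hle (not_le.2 (Nat.pow_lt_pow_right hp.one_lt (by omega)))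

lemma sum_zmod_sub {q : ℕ} [NeZero q] (a : ZMod q) (g : ZMod q → ℂ) :
    ∑ x : ZMod q, g (x - a) = ∑ x : ZMod q, g x :=
  Fintype.sum_equiv (Equiv.subRight a) _ _ (fun _ => rfl)


lemma sum3_reindex {q : ℕ} [NeZero q] (w₁ w₂ w₃ : (ZMod q)ˣ)
    (F : ZMod q → ZMod q → ZMod q → ℂ) :
    ∑ t : ZMod q, ∑ u : ZMod q, ∑ v : ZMod q,
      F ((w₁ : ZMod q) * t) ((w₂ : ZMod q) * u) ((w₃ : ZMod q) * v)
    = ∑ t : ZMod q, ∑ u : ZMod q, ∑ v : ZMod q, F t u v := by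
  have h3 : ∀ a b : ZMod q, ∑ v : ZMod q, F a b ((w₃ : ZMod q) * v) = ∑ v : ZMod q, F a b v :=
    fun a b => sum_zmod_mul_unit w₃ (fun v => F a b v)
  have h2 : ∀ a : ZMod q, (∑ u : ZMod q, ∑ v : ZMod q, F a ((w₂ : ZMod q) * u) v)
      = ∑ u : ZMod q, ∑ v : ZMod q, F a u v :=
    fun a => sum_zmod_mul_unit w₂ (fun u => ∑ v : ZMod q, F a u v)
  calc ∑ t : ZMod q, ∑ u : ZMod q, ∑ v : ZMod q,
        F ((w₁ : ZMod q) * t) ((w₂ : ZMod q) * u) ((w₃ : ZMod q) * v)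
      = ∑ t : ZMod q, ∑ u : ZMod q, ∑ v : ZMod q,
        F ((w₁ : ZMod q) * t) ((w₂ : ZMod q) * u) v := by
        refine sum_congr rfl fun t _ => sum_congr rfl fun u _ => h3 _ _
    _ = ∑ t : ZMod q, ∑ u : ZMod q, ∑ v : ZMod q, F ((w₁ : ZMod q) * t) u v := by
        refine sum_congr rfl fun t _ => h2 _
    _ = ∑ t : ZMod q, ∑ u : ZMod q, ∑ v : ZMod q, F t u v :=
        sum_zmod_mul_unit w₁ (fun t => ∑ u : ZMod q, ∑ v : ZMod q, F t u v)

lemma eq_zero_of_self_eq_mul {S C : ℂ} (h : S = C * S) (hC : C ≠ 1) : S = 0 := by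
  have h2 : (C - 1) * S = 0 := by linear_combination -h
  rcases mul_eq_zero.1 h2 with h3 | h3
  · exact absurd (by linear_combination h3) hC
  · exact h3

lemma mul_rearrange₁ (x y m A B C D E V : ℂ) (h : x * y = 1) :
    x * A * (y * B) * C * D * E * (m * V) = m * (A * B * C * D * E * V) := by
  linear_combination (A * B * C * D * E * V * m) * h

lemma mul_rearrange₂ (x y m A B C D E V : ℂ) (h : x * y = 1) :
    x * A * B * (y * C) * D * E * (m * V) = m * (A * B * C * D * E * V) := by
  linear_combination (A * B * C * D * E * V * m) * h

lemma mul_rearrange₃ (x y m A B C D E V : ℂ) (h : x * y = 1) :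
    x * A * (y * B) * (y * C) * (x * D) * E * (m * V) = m * (A * B * C * D * E * V) := by
  linear_combination (A * B * C * D * E * V * m * (x * y + 1)) * h

lemma Hhat_vanish (p k : ℕ) [Fact p.Prime] (hk : 1 ≤ k)
    (χ ψ : DirichletCharacter ℂ (p ^ k)) (hψ : ψ.IsPrimitive) (m₁ m₂ m₃ r : ℤ)
    (h : (∃ c, (m₁ : ZMod (p ^ k)) = (p : ZMod (p ^ k)) * c) ∨
         (∃ c, (m₂ : ZMod (p ^ k)) = (p : ZMod (p ^ k)) * c) ∨
         (∃ c, (m₃ : ZMod (p ^ k)) = (p : ZMod (p ^ k)) * c) ∨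
         (∃ c, (r : ZMod (p ^ k)) = (p : ZMod (p ^ k)) * c)) :
    Hhat ψ χ m₁ m₂ m₃ r = 0 := by
  have hp : p.Prime := Fact.out
  haveI : NeZero (p ^ k) := ⟨pow_ne_zero _ hp.ne_zero⟩
  obtain ⟨w, hw1, hw0⟩ := exists_bad_unit p k hk ψ hψ
  have hψw : ψ ((w : ZMod (p ^ k))) * (starRingEnd ℂ) (ψ (w : ZMod (p ^ k))) = 1 :=
    unit_mul_conj ψ w.isUnit
  have hχw : χ ((w : ZMod (p ^ k))) * (starRingEnd ℂ) (χ (w : ZMod (p ^ k))) = 1 :=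
    unit_mul_conj χ w.isUnit
  have hcψw : (starRingEnd ℂ) (ψ (w : ZMod (p ^ k))) ≠ 1 := by
    intro hh
    apply hw1
    have := congrArg (starRingEnd ℂ) hh
    rwa [Complex.conj_conj, map_one] at this
  have hwinv : ((w⁻¹ : (ZMod (p ^ k))ˣ) : ZMod (p ^ k)) * (w : ZMod (p ^ k)) = 1 := by
    rw [← Units.val_mul, inv_mul_cancel, Units.val_one]
  set F : ZMod (p ^ k) → ZMod (p ^ k) → ZMod (p ^ k) → ℂ := fun t u v =>
    χ (t + (m₂ : ZMod (p ^ k)) * u) *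
      (starRingEnd ℂ) (χ ((r : ZMod (p ^ k)) * t + ((m₁ * m₂ : ℤ) : ZMod (p ^ k)))) *
      (starRingEnd ℂ) (χ u) * χ (-(m₁ : ZMod (p ^ k)) + (r : ZMod (p ^ k)) * u) *
      eN (p ^ k) (((((m₃ : ZMod (p ^ k)) * (v * t)).val : ℕ)) : ℤ) *
      (starRingEnd ℂ) (ψ v) with hF
  have hH : Hhat ψ χ m₁ m₂ m₃ r = ∑ t : ZMod (p ^ k), ∑ u : ZMod (p ^ k), ∑ v : ZMod (p ^ k),
      F t u v := by
    unfold Hhat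
    refine sum_congr rfl fun t _ => sum_congr rfl fun u _ => sum_congr rfl fun v _ => ?_
    rw [hF, eN_val_eq]
  rw [hH]
  rcases h with ⟨c, hc⟩ | ⟨c, hc⟩ | ⟨c, hc⟩ | ⟨c, hc⟩
  · -- p ∣ m₁ : scale t,u by w, v by w⁻¹; multiplier ψ w
    have key : ∀ t u v : ZMod (p ^ k),
        F ((w : ZMod (p ^ k)) * t) ((w : ZMod (p ^ k)) * u) (((w⁻¹ : (ZMod (p ^ k))ˣ) : ZMod (p ^ k)) * v)
        = ψ (w : ZMod (p ^ k)) * F t u v := by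
      intro t u v
      rw [hF]; simp only
      rw [show (w : ZMod (p ^ k)) * t + (m₂ : ZMod (p ^ k)) * ((w : ZMod (p ^ k)) * u)
          = (w : ZMod (p ^ k)) * (t + (m₂ : ZMod (p ^ k)) * u) by ring]
      rw [show (r : ZMod (p ^ k)) * ((w : ZMod (p ^ k)) * t) + ((m₁ * m₂ : ℤ) : ZMod (p ^ k))
          = (w : ZMod (p ^ k)) * ((r : ZMod (p ^ k)) * t + ((m₁ * m₂ : ℤ) : ZMod (p ^ k))) by
        push_cast
        rw [hc]
        linear_combination (-(c * (m₂ : ZMod (p ^ k)))) * hw0]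
      rw [show -(m₁ : ZMod (p ^ k)) + (r : ZMod (p ^ k)) * ((w : ZMod (p ^ k)) * u)
          = (w : ZMod (p ^ k)) * (-(m₁ : ZMod (p ^ k)) + (r : ZMod (p ^ k)) * u) by
        rw [hc]
        linear_combination c * hw0]
      rw [show (m₃ : ZMod (p ^ k)) * ((((w⁻¹ : (ZMod (p ^ k))ˣ) : ZMod (p ^ k)) * v) * ((w : ZMod (p ^ k)) * t))
          = (m₃ : ZMod (p ^ k)) * (v * t) by
        linear_combination ((m₃ : ZMod (p ^ k)) * v * t) * hwinv]
      simp only [map_mul]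
      rw [conj_char_inv ψ w]
      exact mul_rearrange₃ _ _ _ _ _ _ _ _ _ hχw
    have hre := sum3_reindex w w w⁻¹ F
    have heq : (∑ t : ZMod (p ^ k), ∑ u : ZMod (p ^ k), ∑ v : ZMod (p ^ k), F t u v)
        = ψ (w : ZMod (p ^ k)) * ∑ t : ZMod (p ^ k), ∑ u : ZMod (p ^ k), ∑ v : ZMod (p ^ k), F t u v := by
      conv_lhs => rw [← hre]
      simp_rw [key, ← Finset.mul_sum]
    exact eq_zero_of_self_eq_mul heq hw1
  · -- p ∣ m₂ : scale t by w, v by w⁻¹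
    have key : ∀ t u v : ZMod (p ^ k),
        F ((w : ZMod (p ^ k)) * t) u (((w⁻¹ : (ZMod (p ^ k))ˣ) : ZMod (p ^ k)) * v)
        = ψ (w : ZMod (p ^ k)) * F t u v := by
      intro t u v
      rw [hF]; simp only
      rw [show (w : ZMod (p ^ k)) * t + (m₂ : ZMod (p ^ k)) * u
          = (w : ZMod (p ^ k)) * (t + (m₂ : ZMod (p ^ k)) * u) by
        rw [hc]
        linear_combination (-(c * u)) * hw0]
      rw [show (r : ZMod (p ^ k)) * ((w : ZMod (p ^ k)) * t) + ((m₁ * m₂ : ℤ) : ZMod (p ^ k))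
          = (w : ZMod (p ^ k)) * ((r : ZMod (p ^ k)) * t + ((m₁ * m₂ : ℤ) : ZMod (p ^ k))) by
        push_cast
        rw [hc]
        linear_combination (-((m₁ : ZMod (p ^ k)) * c)) * hw0]
      rw [show (m₃ : ZMod (p ^ k)) * ((((w⁻¹ : (ZMod (p ^ k))ˣ) : ZMod (p ^ k)) * v) * ((w : ZMod (p ^ k)) * t))
          = (m₃ : ZMod (p ^ k)) * (v * t) by
        linear_combination ((m₃ : ZMod (p ^ k)) * v * t) * hwinv]
      simp only [map_mul]
      rw [conj_char_inv ψ w]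
      exact mul_rearrange₁ _ _ _ _ _ _ _ _ _ hχw
    have hre := sum3_reindex w 1 w⁻¹ F
    simp only [Units.val_one, one_mul] at hre
    have heq : (∑ t : ZMod (p ^ k), ∑ u : ZMod (p ^ k), ∑ v : ZMod (p ^ k), F t u v)
        = ψ (w : ZMod (p ^ k)) * ∑ t : ZMod (p ^ k), ∑ u : ZMod (p ^ k), ∑ v : ZMod (p ^ k), F t u v := by
      conv_lhs => rw [← hre]
      simp_rw [key, ← Finset.mul_sum]
    exact eq_zero_of_self_eq_mul heq hw1
  · -- p ∣ m₃ : scale v by w; multiplier conj ψ w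
    have key : ∀ t u v : ZMod (p ^ k),
        F t u ((w : ZMod (p ^ k)) * v)
        = (starRingEnd ℂ) (ψ (w : ZMod (p ^ k))) * F t u v := by
      intro t u v
      rw [hF]; simp only
      rw [show (m₃ : ZMod (p ^ k)) * (((w : ZMod (p ^ k)) * v) * t)
          = (m₃ : ZMod (p ^ k)) * (v * t) by
        rw [hc]
        linear_combination (c * v * t) * hw0]
      simp only [map_mul]
      ring
    have hre := sum3_reindex 1 1 w F
    simp only [Units.val_one, one_mul] at hre
    have heq : (∑ t : ZMod (p ^ k), ∑ u : ZMod (p ^ k), ∑ v : ZMod (p ^ k), F t u v)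
        = (starRingEnd ℂ) (ψ (w : ZMod (p ^ k))) * ∑ t : ZMod (p ^ k), ∑ u : ZMod (p ^ k), ∑ v : ZMod (p ^ k), F t u v := by
      conv_lhs => rw [← hre]
      simp_rw [key, ← Finset.mul_sum]
    exact eq_zero_of_self_eq_mul heq hcψw
  · -- p ∣ r : scale t,u by w, v by w⁻¹
    have key : ∀ t u v : ZMod (p ^ k),
        F ((w : ZMod (p ^ k)) * t) ((w : ZMod (p ^ k)) * u) (((w⁻¹ : (ZMod (p ^ k))ˣ) : ZMod (p ^ k)) * v)
        = ψ (w : ZMod (p ^ k)) * F t u v := by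
      intro t u v
      rw [hF]; simp only
      rw [show (w : ZMod (p ^ k)) * t + (m₂ : ZMod (p ^ k)) * ((w : ZMod (p ^ k)) * u)
          = (w : ZMod (p ^ k)) * (t + (m₂ : ZMod (p ^ k)) * u) by ring]
      rw [show (r : ZMod (p ^ k)) * ((w : ZMod (p ^ k)) * t) + ((m₁ * m₂ : ℤ) : ZMod (p ^ k))
          = (r : ZMod (p ^ k)) * t + ((m₁ * m₂ : ℤ) : ZMod (p ^ k)) by
        rw [hc]
        linear_combination (c * t) * hw0]
      rw [show -(m₁ : ZMod (p ^ k)) + (r : ZMod (p ^ k)) * ((w : ZMod (p ^ k)) * u)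
          = -(m₁ : ZMod (p ^ k)) + (r : ZMod (p ^ k)) * u by
        rw [hc]
        linear_combination (c * u) * hw0]
      rw [show (m₃ : ZMod (p ^ k)) * ((((w⁻¹ : (ZMod (p ^ k))ˣ) : ZMod (p ^ k)) * v) * ((w : ZMod (p ^ k)) * t))
          = (m₃ : ZMod (p ^ k)) * (v * t) by
        linear_combination ((m₃ : ZMod (p ^ k)) * v * t) * hwinv]
      simp only [map_mul]
      rw [conj_char_inv ψ w]
      exact mul_rearrange₂ _ _ _ _ _ _ _ _ _ hχw
    have hre := sum3_reindex w w w⁻¹ F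
    have heq : (∑ t : ZMod (p ^ k), ∑ u : ZMod (p ^ k), ∑ v : ZMod (p ^ k), F t u v)
        = ψ (w : ZMod (p ^ k)) * ∑ t : ZMod (p ^ k), ∑ u : ZMod (p ^ k), ∑ v : ZMod (p ^ k), F t u v := by
      conv_lhs => rw [← hre]
      simp_rw [key, ← Finset.mul_sum]
    exact eq_zero_of_self_eq_mul heq hw1

lemma inner_chain {q : ℕ} [NeZero q] (χ : DirichletCharacter ℂ q) (t : ZMod q) :
    ∑ u : ZMod q, χ (t + u) * (starRingEnd ℂ) (χ (t + 1)) * (starRingEnd ℂ) (χ u) * χ (-1 + u)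
    = ∑ u : ZMod q, χ (t + 1) * (starRingEnd ℂ) (χ (t + 1 + u)) * (starRingEnd ℂ) (χ u) * χ (u + 1) := by
  by_cases h1 : IsUnit (t + 1)
  · have hs1 : ((h1.unit : (ZMod q)ˣ) : ZMod q) = t + 1 := h1.unit_spec
    set s1 := h1.unit with hs1def
    have hinv1 : ((s1⁻¹ : (ZMod q)ˣ) : ZMod q) * (s1 : ZMod q) = 1 := by
      rw [← Units.val_mul, inv_mul_cancel, Units.val_one]
    have hm1 : IsUnit (-1 : ZMod q) := isUnit_one.neg
    have hp1 : χ (t + 1) * (starRingEnd ℂ) (χ (t + 1)) = 1 := unit_mul_conj χ h1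
    have hpm : χ (-1) * (starRingEnd ℂ) (χ (-1)) = 1 := unit_mul_conj χ hm1
    -- A side
    have hA : (∑ u : ZMod q, χ (t + u) * (starRingEnd ℂ) (χ (t + 1)) * (starRingEnd ℂ) (χ u) * χ (-1 + u))
        = (starRingEnd ℂ) (χ (t + 1)) * ∑ u : ZMod q, χ (u + 1) * (starRingEnd ℂ) (χ u) * χ (t - u) := by
      rw [← sum_zmod_neg (fun u => χ (t + u) * (starRingEnd ℂ) (χ (t + 1)) * (starRingEnd ℂ) (χ u) * χ (-1 + u)),
        Finset.mul_sum]
      refine sum_congr rfl fun u _ => ?_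
      rw [show t + -u = t - u from by ring, show (-1 : ZMod q) + -u = -1 * (u + 1) from by ring,
        show (-u : ZMod q) = -1 * u from by ring]
      simp only [map_mul]
      linear_combination ((starRingEnd ℂ) (χ (t + 1)) * χ (u + 1) * (starRingEnd ℂ) (χ u) * χ (t - u)) * hpm
    -- B side
    have hB0 : (∑ u : ZMod q, χ (t + 1) * (starRingEnd ℂ) (χ (t + 1 + u)) * (starRingEnd ℂ) (χ u) * χ (u + 1))
        = χ (t + 1) * ∑ u : ZMod q, (starRingEnd ℂ) (χ (t + 1 + u)) * (starRingEnd ℂ) (χ u) * χ (u + 1) := by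
      rw [Finset.mul_sum]
      exact sum_congr rfl fun u _ => by ring
    have hB1 : (∑ u : ZMod q, (starRingEnd ℂ) (χ (t + 1 + u)) * (starRingEnd ℂ) (χ u) * χ (u + 1))
        = ∑ x : ZMod q, χ x * χ (x + 1) * (starRingEnd ℂ) (χ ((t + 1) * x + 1)) := by
      rw [sum_eq_sum_units _ (fun x hx => by simp [χ.map_nonunit hx]),
        sum_eq_sum_units (fun x => χ x * χ (x + 1) * (starRingEnd ℂ) (χ ((t + 1) * x + 1)))
          (fun x hx => by simp [χ.map_nonunit hx]),
        ← sum_units_inv (fun s : (ZMod q)ˣ =>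
          (starRingEnd ℂ) (χ (t + 1 + (s : ZMod q))) * (starRingEnd ℂ) (χ (s : ZMod q)) * χ ((s : ZMod q) + 1))]
      refine sum_congr rfl fun s _ => ?_
      have hsi : ((s⁻¹ : (ZMod q)ˣ) : ZMod q) * (s : ZMod q) = 1 := by
        rw [← Units.val_mul, inv_mul_cancel, Units.val_one]
      have hps : χ (s : ZMod q) * (starRingEnd ℂ) (χ (s : ZMod q)) = 1 := unit_mul_conj χ s.isUnit
      rw [show t + 1 + ((s⁻¹ : (ZMod q)ˣ) : ZMod q)
            = ((s⁻¹ : (ZMod q)ˣ) : ZMod q) * ((t + 1) * (s : ZMod q) + 1) from by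
          linear_combination (-(t+1)) * hsi,
        show ((s⁻¹ : (ZMod q)ˣ) : ZMod q) + 1 = ((s⁻¹ : (ZMod q)ˣ) : ZMod q) * (1 + (s : ZMod q)) from by
          linear_combination -hsi]
      simp only [map_mul]
      rw [conj_char_inv χ s, char_inv χ s, show (1 : ZMod q) + (s : ZMod q) = (s : ZMod q) + 1 from by ring]
      linear_combination (χ (s : ZMod q) * χ ((s : ZMod q) + 1) * (starRingEnd ℂ) (χ ((t + 1) * (s : ZMod q) + 1))) * hps
    have hB2 : (∑ x : ZMod q, χ x * χ (x + 1) * (starRingEnd ℂ) (χ ((t + 1) * x + 1)))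
        = (starRingEnd ℂ) (χ (t + 1)) * (starRingEnd ℂ) (χ (t + 1)) *
          ∑ x : ZMod q, χ x * χ (x + t + 1) * (starRingEnd ℂ) (χ (x + 1)) := by
      rw [← sum_zmod_mul_unit s1⁻¹ (fun x => χ x * χ (x + 1) * (starRingEnd ℂ) (χ ((t + 1) * x + 1))),
        Finset.mul_sum]
      refine sum_congr rfl fun x _ => ?_
      have hsi : ((s1⁻¹ : (ZMod q)ˣ) : ZMod q) * (s1 : ZMod q) = 1 := by
        rw [← Units.val_mul, inv_mul_cancel, Units.val_one]
      rw [show ((s1⁻¹ : (ZMod q)ˣ) : ZMod q) * x + 1 = ((s1⁻¹ : (ZMod q)ˣ) : ZMod q) * (x + (t + 1)) from by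
          rw [← hs1]; linear_combination -hsi,
        show (t + 1) * (((s1⁻¹ : (ZMod q)ˣ) : ZMod q) * x) + 1 = x + 1 from by
          rw [← hs1]; linear_combination x * hsi,
        show x + (t + 1) = x + t + 1 from by ring]
      simp only [map_mul]
      rw [char_inv χ s1, hs1]
      ring
    have hB3 : (∑ x : ZMod q, χ x * χ (x + t + 1) * (starRingEnd ℂ) (χ (x + 1)))
        = ∑ x : ZMod q, χ (x - 1) * χ (x + t) * (starRingEnd ℂ) (χ x) := by
      rw [← sum_zmod_sub (1 : ZMod q) (fun x => χ x * χ (x + t + 1) * (starRingEnd ℂ) (χ (x + 1)))]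
      refine sum_congr rfl fun x _ => ?_
      rw [show x - 1 + t + 1 = x + t from by ring, show x - 1 + 1 = x from by ring]
    have hB4 : (∑ x : ZMod q, χ (x - 1) * χ (x + t) * (starRingEnd ℂ) (χ x))
        = ∑ x : ZMod q, χ (x + 1) * (starRingEnd ℂ) (χ x) * χ (t - x) := by
      rw [← sum_zmod_neg (fun x => χ (x - 1) * χ (x + t) * (starRingEnd ℂ) (χ x))]
      refine sum_congr rfl fun x _ => ?_
      rw [show -x - 1 = -1 * (x + 1) from by ring, show -x + t = t - x from by ring,
        show (-x : ZMod q) = -1 * x from by ring]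
      simp only [map_mul]
      linear_combination (χ (x + 1) * (starRingEnd ℂ) (χ x) * χ (t - x)) * hpm
    rw [hA, hB0, hB1, hB2, hB3, hB4]
    linear_combination (-((∑ x : ZMod q, χ (x + 1) * (starRingEnd ℂ) (χ x) * χ (t - x)) *
      (starRingEnd ℂ) (χ (t + 1)))) * hp1
  · rw [Finset.sum_eq_zero, Finset.sum_eq_zero]
    · intro u _; simp [χ.map_nonunit h1]
    · intro u _; simp [χ.map_nonunit h1]

lemma claimM {q : ℕ} [NeZero q] (χ ψ : DirichletCharacter ℂ q) :
    ∑ t : ZMod q, ∑ u : ZMod q,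
      χ (t + u) * (starRingEnd ℂ) (χ (t + 1)) * (starRingEnd ℂ) (χ u) * χ (-1 + u) * ψ t
    = gSum χ ψ := by
  have step2 : ∀ u : ZMod q,
      (∑ T : ZMod q, χ T * (starRingEnd ℂ) (χ (T + 1)) * (starRingEnd ℂ) (χ u) * χ (u + 1) * ψ (u * T - 1))
      = ∑ t : ZMod q, χ (t + 1) * (starRingEnd ℂ) (χ (t + 1 + u)) * (starRingEnd ℂ) (χ u) * χ (u + 1) * ψ t := by
    intro u
    by_cases hu : IsUnit u
    · have hs : ((hu.unit : (ZMod q)ˣ) : ZMod q) = u := hu.unit_spec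
      set s := hu.unit with hsdef
      have hsi : ((s⁻¹ : (ZMod q)ˣ) : ZMod q) * (s : ZMod q) = 1 := by
        rw [← Units.val_mul, inv_mul_cancel, Units.val_one]
      have hps : χ u * (starRingEnd ℂ) (χ u) = 1 := unit_mul_conj χ hu
      rw [← sum_zmod_mul_unit s⁻¹ (fun x => χ x * (starRingEnd ℂ) (χ (x + 1)) *
          (starRingEnd ℂ) (χ u) * χ (u + 1) * ψ (u * x - 1)),
        ← sum_zmod_add (1 : ZMod q) (fun x => χ (((s⁻¹ : (ZMod q)ˣ) : ZMod q) * x) *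
          (starRingEnd ℂ) (χ (((s⁻¹ : (ZMod q)ˣ) : ZMod q) * x + 1)) *
          (starRingEnd ℂ) (χ u) * χ (u + 1) * ψ (u * (((s⁻¹ : (ZMod q)ˣ) : ZMod q) * x) - 1))]
      refine sum_congr rfl fun t _ => ?_
      rw [show ((s⁻¹ : (ZMod q)ˣ) : ZMod q) * (t + 1) + 1
            = ((s⁻¹ : (ZMod q)ˣ) : ZMod q) * (t + 1 + u) from by rw [← hs]; linear_combination -hsi,
        show u * (((s⁻¹ : (ZMod q)ˣ) : ZMod q) * (t + 1)) - 1 = t from by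
          rw [← hs]; linear_combination (t + 1) * hsi]
      simp only [map_mul]
      rw [conj_char_inv χ s, char_inv χ s, hs]
      linear_combination (χ (t + 1) * (starRingEnd ℂ) (χ (t + 1 + u)) * (starRingEnd ℂ) (χ u) *
        χ (u + 1) * ψ t) * hps
    · rw [Finset.sum_eq_zero fun T _ => by simp [χ.map_nonunit hu],
        Finset.sum_eq_zero fun T _ => by simp [χ.map_nonunit hu]]
  have step4 : ∀ t : ZMod q,
      (∑ u : ZMod q, χ (t + 1) * (starRingEnd ℂ) (χ (t + 1 + u)) * (starRingEnd ℂ) (χ u) * χ (u + 1) * ψ t)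
      = ∑ u : ZMod q, χ (t + u) * (starRingEnd ℂ) (χ (t + 1)) * (starRingEnd ℂ) (χ u) * χ (-1 + u) * ψ t := by
    intro t
    rw [← Finset.sum_mul, ← Finset.sum_mul]
    exact congrArg (· * ψ t) (inner_chain χ t).symm
  calc ∑ t : ZMod q, ∑ u : ZMod q,
        χ (t + u) * (starRingEnd ℂ) (χ (t + 1)) * (starRingEnd ℂ) (χ u) * χ (-1 + u) * ψ t
      = ∑ t : ZMod q, ∑ u : ZMod q,
        χ (t + 1) * (starRingEnd ℂ) (χ (t + 1 + u)) * (starRingEnd ℂ) (χ u) * χ (u + 1) * ψ t := by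
        exact sum_congr rfl fun t _ => (step4 t).symm
    _ = ∑ u : ZMod q, ∑ t : ZMod q,
        χ (t + 1) * (starRingEnd ℂ) (χ (t + 1 + u)) * (starRingEnd ℂ) (χ u) * χ (u + 1) * ψ t :=
        Finset.sum_comm
    _ = ∑ u : ZMod q, ∑ T : ZMod q,
        χ T * (starRingEnd ℂ) (χ (T + 1)) * (starRingEnd ℂ) (χ u) * χ (u + 1) * ψ (u * T - 1) := by
        exact sum_congr rfl fun u _ => (step2 u).symm
    _ = gSum χ ψ := by
        rw [gSum]
        exact Finset.sum_comm

lemma vsum_eval (p k : ℕ) [Fact p.Prime] (hk : 1 ≤ k)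
    (ψ : DirichletCharacter ℂ (p ^ k)) (hψ : ψ.IsPrimitive) (t : ZMod (p ^ k)) :
    ∑ v : ZMod (p ^ k), eN (p ^ k) (((v * t).val : ℕ) : ℤ) * (starRingEnd ℂ) (ψ v)
    = ψ t * ∑ v : ZMod (p ^ k), (starRingEnd ℂ) (ψ v) * eN (p ^ k) ((v.val : ℕ) : ℤ) := by
  have hp : p.Prime := Fact.out
  haveI : NeZero (p ^ k) := ⟨pow_ne_zero _ hp.ne_zero⟩
  by_cases h : IsUnit t
  · have hs : ((h.unit : (ZMod (p ^ k))ˣ) : ZMod (p ^ k)) = t := h.unit_spec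
    set s := h.unit with hsdef
    have hsi : ((s⁻¹ : (ZMod (p ^ k))ˣ) : ZMod (p ^ k)) * (s : ZMod (p ^ k)) = 1 := by
      rw [← Units.val_mul, inv_mul_cancel, Units.val_one]
    rw [← sum_zmod_mul_unit s⁻¹ (fun v => eN (p ^ k) (((v * t).val : ℕ) : ℤ) * (starRingEnd ℂ) (ψ v)),
      Finset.mul_sum]
    refine sum_congr rfl fun v _ => ?_
    rw [show ((s⁻¹ : (ZMod (p ^ k))ˣ) : ZMod (p ^ k)) * v * t = v from by
      rw [← hs]; linear_combination v * hsi]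
    simp only [map_mul]
    rw [conj_char_inv ψ s, hs]
    ring
  · obtain ⟨c, hcc⟩ := nonunit_eq_p_mul p k hk t h
    obtain ⟨w, hw1, hw0⟩ := exists_bad_unit p k hk ψ hψ
    have hcψw : (starRingEnd ℂ) (ψ (w : ZMod (p ^ k))) ≠ 1 := by
      intro hh
      apply hw1
      have := congrArg (starRingEnd ℂ) hh
      rwa [Complex.conj_conj, map_one] at this
    rw [ψ.map_nonunit h, zero_mul]
    refine eq_zero_of_self_eq_mul (C := (starRingEnd ℂ) (ψ (w : ZMod (p ^ k)))) ?_ hcψw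
    conv_lhs => rw [← sum_zmod_mul_unit w (fun v => eN (p ^ k) (((v * t).val : ℕ) : ℤ) *
      (starRingEnd ℂ) (ψ v))]
    rw [Finset.mul_sum]
    refine sum_congr rfl fun v _ => ?_
    rw [show (w : ZMod (p ^ k)) * v * t = v * t from by
      rw [hcc]; linear_combination (v * c) * hw0]
    simp only [map_mul]
    ring

lemma Hhat_one (p k : ℕ) [Fact p.Prime] (hk : 1 ≤ k)
    (χ ψ : DirichletCharacter ℂ (p ^ k)) (hψ : ψ.IsPrimitive) :
    Hhat ψ χ 1 1 1 1 = gaussSumE (p ^ k) (fun v => (starRingEnd ℂ) (ψ v)) * gSum χ ψ := by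
  have hp : p.Prime := Fact.out
  haveI : NeZero (p ^ k) := ⟨pow_ne_zero _ hp.ne_zero⟩
  unfold Hhat gaussSumE
  simp only [mul_one, one_mul, Int.cast_one]
  calc ∑ t : ZMod (p ^ k), ∑ u : ZMod (p ^ k), ∑ v : ZMod (p ^ k),
        χ (t + u) * (starRingEnd ℂ) (χ (t + 1)) * (starRingEnd ℂ) (χ u) * χ (-1 + u) *
          eN (p ^ k) (((v * t).val : ℕ) : ℤ) * (starRingEnd ℂ) (ψ v)
      = ∑ t : ZMod (p ^ k), ∑ u : ZMod (p ^ k),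
        (χ (t + u) * (starRingEnd ℂ) (χ (t + 1)) * (starRingEnd ℂ) (χ u) * χ (-1 + u)) *
          (ψ t * ∑ v : ZMod (p ^ k), (starRingEnd ℂ) (ψ v) * eN (p ^ k) ((v.val : ℕ) : ℤ)) := by
        refine sum_congr rfl fun t _ => sum_congr rfl fun u _ => ?_
        rw [← vsum_eval p k hk ψ hψ t, Finset.mul_sum]
        exact sum_congr rfl fun v _ => by ring
    _ = (∑ v : ZMod (p ^ k), (starRingEnd ℂ) (ψ v) * eN (p ^ k) ((v.val : ℕ) : ℤ)) *
        ∑ t : ZMod (p ^ k), ∑ u : ZMod (p ^ k),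
          χ (t + u) * (starRingEnd ℂ) (χ (t + 1)) * (starRingEnd ℂ) (χ u) * χ (-1 + u) * ψ t := by
        conv_rhs => rw [Finset.mul_sum]
        refine sum_congr rfl fun t _ => ?_
        conv_rhs => rw [Finset.mul_sum]
        exact sum_congr rfl fun u _ => by ring
    _ = (∑ v : ZMod (p ^ k), (starRingEnd ℂ) (ψ v) * eN (p ^ k) ((v.val : ℕ) : ℤ)) * gSum χ ψ := by
        rw [claimM]

theorem Hhat_eval_psi_primitive (p : ℕ) [Fact p.Prime] (k : ℕ) (hk : 1 ≤ k)
    (χ ψ : DirichletCharacter ℂ (p ^ k)) (hχ : χ.IsPrimitive) (hψ : ψ.IsPrimitive)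
    (m₁ m₂ m₃ r : ℤ)
    (h₁ : ∃ a : ℕ, m₁ = (p : ℤ) ^ a) (h₂ : ∃ a : ℕ, m₂ = (p : ℤ) ^ a)
    (h₃ : ∃ a : ℕ, m₃ = (p : ℤ) ^ a) (hr : ∃ a : ℕ, r = (p : ℤ) ^ a)
    (hcop : Int.gcd m₁ r = 1) :
    (¬(m₁ = 1 ∧ m₂ = 1 ∧ m₃ = 1 ∧ r = 1) → Hhat ψ χ m₁ m₂ m₃ r = 0) ∧
      Hhat ψ χ 1 1 1 1 =
        gaussSumE (p ^ k) (fun v => (starRingEnd ℂ) (ψ v)) * gSum χ ψ := by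
  have hp : p.Prime := Fact.out
  constructor
  · intro hne
    apply Hhat_vanish p k hk χ ψ hψ
    have hone : ∀ (m : ℤ), (∃ a : ℕ, m = (p : ℤ) ^ a) → m ≠ 1 →
        ∃ c : ZMod (p ^ k), (m : ZMod (p ^ k)) = (p : ZMod (p ^ k)) * c := by
      rintro m ⟨a, rfl⟩ hm
      have ha : a ≠ 0 := by rintro rfl; simp at hm
      refine ⟨(p : ZMod (p ^ k)) ^ (a - 1), ?_⟩
      push_cast
      rw [← pow_succ']
      congr 1
      omega
    by_cases e1 : m₁ = 1
    · by_cases e2 : m₂ = 1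
      · by_cases e3 : m₃ = 1
        · have e4 : r ≠ 1 := by tauto
          exact Or.inr (Or.inr (Or.inr (hone r hr e4)))
        · exact Or.inr (Or.inr (Or.inl (hone m₃ h₃ e3)))
      · exact Or.inr (Or.inl (hone m₂ h₂ e2))
    · exact Or.inl (hone m₁ h₁ e1)
  · exact Hhat_one p k hk χ ψ hψ
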